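/- Define ρ₁(5) = 0.913, ρ₁(6) = 0.952, ρ₁(7) = 0.99, and a(5) = a(6) = 0.1, a(7) = 3.75/49. For each n ∈ {5, 6, 7} and each ρ with 3·a(n)/π ≤ ρ ≤ ρ₁(n), one has I(circPerim0(ρπ/3), n, 0, ρ) > 0, i.e., √(4π·(ρπ/3) − (ρπ/3)²) + (5 − n)·p₅' − ρ·p₅ > 0. -/

import Mathlib

open Real

/-- Perimeter of a regular spherical `n`-gon of area `x` on the unit sphere. -/
noncomputable def regPerim (x n : ℝ) : ℝ :=
  n * Real.arccos ((Real.cos (2 * π / n) +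
      (Real.cos ((π - (2 * π - x) / n) / 2)) ^ 2) /
      (Real.sin ((π - (2 * π - x) / n) / 2)) ^ 2)

/-- Circumference of a circle on the unit sphere enclosing area `a`. -/
noncomputable def circPerim0 (a : ℝ) : ℝ := Real.sqrt (4 * π * a - a ^ 2)

/-- Perimeter of the regular spherical pentagon of area `π/3`. -/
noncomputable def p5 : ℝ := 5 * Real.arccos ((4 * Real.cos (2 * π / 5) + 1) / 3)

/-- Derivative at `n = 5` of `n ↦ regPerim (π/3) n`. -/
noncomputable def p5' : ℝ := deriv (fun n : ℝ => regPerim (π / 3) n) 5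

/-- `B' = -∂₁ regPerim (π/3, 5)`. -/
noncomputable def B' : ℝ := - deriv (fun x : ℝ => regPerim x 5) (π / 3)

/-- The isoperimetric functional `I(ℓ, n, t, ρ)`. -/
noncomputable def Ifun (ℓ n t ρ : ℝ) : ℝ := ℓ - t * B' + (5 - n) * p5' - ρ * p5

/-- The constant `ρ₁` of the proof (values specified only for `n = 5, 6, 7`). -/
noncomputable def rho1 : ℕ → ℝ
  | 5 => 0.913
  | 6 => 0.952
  | 7 => 0.99
  | _ => 1

/-- The constant `T₁` of the proof (values specified only for `n = 5, 6, 7`). -/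
noncomputable def T1 : ℕ → ℝ
  | 5 => 0.117
  | 6 => 0.065
  | 7 => 0.0134
  | _ => 0

/-- The constant `T₀` of the proof (values specified only for `n = 5, 6, 7`). -/
noncomputable def T0 : ℕ → ℝ
  | 5 => -0.1382
  | 6 => -0.0711
  | 7 => -0.01362
  | _ => 0

/-- The constant `ρ₂` of the proof (values specified only for `n = 5, 6, 7`). -/
noncomputable def rho2 : ℕ → ℝ
  | 5 => 0.913
  | 6 => 0.952
  | 7 => 0.99
  | _ => 1

/-- The upper bound `R(n)`: `0.9957` for `n = 5` and `1` otherwise. -/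
noncomputable def Rbd : ℕ → ℝ
  | 5 => 0.9957
  | _ => 1

/-- The area lower bound `a(n) = min (3.75 / n², 0.1)`. -/
noncomputable def aFn (n : ℕ) : ℝ := min (3.75 / (n : ℝ) ^ 2) 0.1


lemma my_sin_lb {x : ℝ} (hx : 0 ≤ x) : x - x^3/6 ≤ Real.sin x := by
  have h : ∫ t in (0:ℝ)..x, (1 - t^2/2) ≤ ∫ t in (0:ℝ)..x, Real.cos t := by
    apply intervalIntegral.integral_mono_on hx
    · exact (Continuous.intervalIntegrable (by fun_prop) _ _)
    · exact (Continuous.intervalIntegrable (by fun_prop) _ _)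
    · intro t _; exact Real.one_sub_sq_div_two_le_cos
  rw [integral_cos, Real.sin_zero, sub_zero] at h
  have e : ∫ t in (0:ℝ)..x, (1 - t^2/2) = x - x^3/6 := by
    rw [intervalIntegral.integral_sub (intervalIntegrable_const)
      ((Continuous.intervalIntegrable (by fun_prop) _ _)),
      intervalIntegral.integral_div, integral_pow, integral_one]
    ring
  linarith [e ▸ h]

lemma my_cos_ub4 {x : ℝ} (hx : 0 ≤ x) : Real.cos x ≤ 1 - x^2/2 + x^4/24 := by
  have h : ∫ t in (0:ℝ)..x, (t - t^3/6) ≤ ∫ t in (0:ℝ)..x, Real.sin t := by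
    apply intervalIntegral.integral_mono_on hx
    · exact (Continuous.intervalIntegrable (by fun_prop) _ _)
    · exact (Continuous.intervalIntegrable (by fun_prop) _ _)
    · intro t ht; exact my_sin_lb ht.1
  rw [integral_sin, Real.cos_zero] at h
  have e : ∫ t in (0:ℝ)..x, (t - t^3/6) = x^2/2 - x^4/24 := by
    rw [intervalIntegral.integral_sub (Continuous.intervalIntegrable (by fun_prop) _ _)
      ((Continuous.intervalIntegrable (by fun_prop) _ _)),
      intervalIntegral.integral_div, integral_pow, integral_id]
    ring
  linarith [e ▸ h]

lemma my_sin_ub5 {x : ℝ} (hx : 0 ≤ x) : Real.sin x ≤ x - x^3/6 + x^5/120 := by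
  have h : ∫ t in (0:ℝ)..x, Real.cos t ≤ ∫ t in (0:ℝ)..x, (1 - t^2/2 + t^4/24) := by
    apply intervalIntegral.integral_mono_on hx
    · exact (Continuous.intervalIntegrable (by fun_prop) _ _)
    · exact (Continuous.intervalIntegrable (by fun_prop) _ _)
    · intro t ht; exact my_cos_ub4 ht.1
  rw [integral_cos, Real.sin_zero, sub_zero] at h
  have e : ∫ t in (0:ℝ)..x, (1 - t^2/2 + t^4/24) = x - x^3/6 + x^5/120 := by
    rw [intervalIntegral.integral_add ((Continuous.intervalIntegrable (by fun_prop) _ _))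
        ((Continuous.intervalIntegrable (by fun_prop) _ _)),
      intervalIntegral.integral_sub (intervalIntegrable_const)
        ((Continuous.intervalIntegrable (by fun_prop) _ _)),
      intervalIntegral.integral_div, intervalIntegral.integral_div, integral_pow, integral_pow, integral_one]
    ring
  linarith [e ▸ h]

lemma my_cos_lb6 {x : ℝ} (hx : 0 ≤ x) : 1 - x^2/2 + x^4/24 - x^6/720 ≤ Real.cos x := by
  have h : ∫ t in (0:ℝ)..x, Real.sin t ≤ ∫ t in (0:ℝ)..x, (t - t^3/6 + t^5/120) := by
    apply intervalIntegral.integral_mono_on hx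
    · exact (Continuous.intervalIntegrable (by fun_prop) _ _)
    · exact (Continuous.intervalIntegrable (by fun_prop) _ _)
    · intro t ht; exact my_sin_ub5 ht.1
  rw [integral_sin, Real.cos_zero] at h
  have e : ∫ t in (0:ℝ)..x, (t - t^3/6 + t^5/120) = x^2/2 - x^4/24 + x^6/720 := by
    rw [intervalIntegral.integral_add ((Continuous.intervalIntegrable (by fun_prop) _ _))
        ((Continuous.intervalIntegrable (by fun_prop) _ _)),
      intervalIntegral.integral_sub (Continuous.intervalIntegrable (by fun_prop) _ _)
        ((Continuous.intervalIntegrable (by fun_prop) _ _)),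
      intervalIntegral.integral_div, intervalIntegral.integral_div, integral_pow, integral_pow, integral_id]
    ring
  linarith [e ▸ h]

lemma my_sin_lb7 {x : ℝ} (hx : 0 ≤ x) : x - x^3/6 + x^5/120 - x^7/5040 ≤ Real.sin x := by
  have h : ∫ t in (0:ℝ)..x, (1 - t^2/2 + t^4/24 - t^6/720) ≤ ∫ t in (0:ℝ)..x, Real.cos t := by
    apply intervalIntegral.integral_mono_on hx
    · exact (Continuous.intervalIntegrable (by fun_prop) _ _)
    · exact (Continuous.intervalIntegrable (by fun_prop) _ _)
    · intro t ht; exact my_cos_lb6 ht.1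
  rw [integral_cos, Real.sin_zero, sub_zero] at h
  have e : ∫ t in (0:ℝ)..x, (1 - t^2/2 + t^4/24 - t^6/720) = x - x^3/6 + x^5/120 - x^7/5040 := by
    rw [intervalIntegral.integral_sub ((Continuous.intervalIntegrable (by fun_prop) _ _))
        ((Continuous.intervalIntegrable (by fun_prop) _ _)),
      intervalIntegral.integral_add ((Continuous.intervalIntegrable (by fun_prop) _ _))
        ((Continuous.intervalIntegrable (by fun_prop) _ _)),
      intervalIntegral.integral_sub (intervalIntegrable_const)
        ((Continuous.intervalIntegrable (by fun_prop) _ _)),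
      intervalIntegral.integral_div, intervalIntegral.integral_div, intervalIntegral.integral_div,
      integral_pow, integral_pow, integral_pow, integral_one]
    ring
  linarith [e ▸ h]

lemma my_cos_ub8 {x : ℝ} (hx : 0 ≤ x) : Real.cos x ≤ 1 - x^2/2 + x^4/24 - x^6/720 + x^8/40320 := by
  have h : ∫ t in (0:ℝ)..x, (t - t^3/6 + t^5/120 - t^7/5040) ≤ ∫ t in (0:ℝ)..x, Real.sin t := by
    apply intervalIntegral.integral_mono_on hx
    · exact (Continuous.intervalIntegrable (by fun_prop) _ _)
    · exact (Continuous.intervalIntegrable (by fun_prop) _ _)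
    · intro t ht; exact my_sin_lb7 ht.1
  rw [integral_sin, Real.cos_zero] at h
  have e : ∫ t in (0:ℝ)..x, (t - t^3/6 + t^5/120 - t^7/5040) = x^2/2 - x^4/24 + x^6/720 - x^8/40320 := by
    rw [intervalIntegral.integral_sub ((Continuous.intervalIntegrable (by fun_prop) _ _))
        ((Continuous.intervalIntegrable (by fun_prop) _ _)),
      intervalIntegral.integral_add ((Continuous.intervalIntegrable (by fun_prop) _ _))
        ((Continuous.intervalIntegrable (by fun_prop) _ _)),
      intervalIntegral.integral_sub (Continuous.intervalIntegrable (by fun_prop) _ _)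
        ((Continuous.intervalIntegrable (by fun_prop) _ _)),
      intervalIntegral.integral_div, intervalIntegral.integral_div, intervalIntegral.integral_div,
      integral_pow, integral_pow, integral_pow, integral_id]
    ring
  linarith [e ▸ h]

lemma sqrt5_lb : (2.2360679 : ℝ) ≤ Real.sqrt 5 := by
  nlinarith [Real.sq_sqrt (show (0:ℝ) ≤ 5 by norm_num), Real.sqrt_nonneg 5]

lemma sqrt5_ub : Real.sqrt 5 ≤ (2.2360680 : ℝ) := by
  nlinarith [Real.sq_sqrt (show (0:ℝ) ≤ 5 by norm_num), Real.sqrt_nonneg 5]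

lemma sqrt3_lb : (1.7320508 : ℝ) ≤ Real.sqrt 3 := by
  nlinarith [Real.sq_sqrt (show (0:ℝ) ≤ 3 by norm_num), Real.sqrt_nonneg 3]

lemma sqrt3_ub : Real.sqrt 3 ≤ (1.7320509 : ℝ) := by
  nlinarith [Real.sq_sqrt (show (0:ℝ) ≤ 3 by norm_num), Real.sqrt_nonneg 3]

lemma sqrt15_lb : (3.8729833 : ℝ) ≤ Real.sqrt 15 := by
  nlinarith [Real.sq_sqrt (show (0:ℝ) ≤ 15 by norm_num), Real.sqrt_nonneg 15]

lemma sqrt15_ub : Real.sqrt 15 ≤ (3.8729834 : ℝ) := by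
  nlinarith [Real.sq_sqrt (show (0:ℝ) ≤ 15 by norm_num), Real.sqrt_nonneg 15]

lemma g5_mem : -1 ≤ Real.sqrt 5 / 3 ∧ Real.sqrt 5 / 3 ≤ 1 := by
  constructor <;> nlinarith [sqrt5_lb, sqrt5_ub]

lemma theta_lb : (0.729722 : ℝ) ≤ Real.arccos (Real.sqrt 5 / 3) := by
  by_contra h
  push_neg at h
  have hθ : Real.cos (Real.arccos (Real.sqrt 5 / 3)) = Real.sqrt 5 / 3 :=
    Real.cos_arccos g5_mem.1 g5_mem.2
  have hmem1 : Real.arccos (Real.sqrt 5 / 3) ∈ Set.Icc 0 π :=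
    ⟨Real.arccos_nonneg _, Real.arccos_le_pi _⟩
  have hmem2 : (0.729722 : ℝ) ∈ Set.Icc 0 π := by
    constructor
    · norm_num
    · nlinarith [Real.pi_gt_d6]
  have := Real.strictAntiOn_cos hmem1 hmem2 h
  rw [hθ] at this
  have hlb := my_cos_lb6 (show (0:ℝ) ≤ 0.729722 by norm_num)
  nlinarith [sqrt5_ub]

lemma theta_ub : Real.arccos (Real.sqrt 5 / 3) ≤ (0.729733 : ℝ) := by
  by_contra h
  push_neg at h
  have hθ : Real.cos (Real.arccos (Real.sqrt 5 / 3)) = Real.sqrt 5 / 3 :=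
    Real.cos_arccos g5_mem.1 g5_mem.2
  have hmem1 : Real.arccos (Real.sqrt 5 / 3) ∈ Set.Icc 0 π :=
    ⟨Real.arccos_nonneg _, Real.arccos_le_pi _⟩
  have hmem2 : (0.729733 : ℝ) ∈ Set.Icc 0 π := by
    constructor
    · norm_num
    · nlinarith [Real.pi_gt_d6]
  have := Real.strictAntiOn_cos hmem2 hmem1 h
  rw [hθ] at this
  have hub := my_cos_ub8 (show (0:ℝ) ≤ 0.729733 by norm_num)
  nlinarith [sqrt5_lb]

lemma cos_two_pi_div_five : Real.cos (2 * π / 5) = (Real.sqrt 5 - 1) / 4 := by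
  have h : (2 * π / 5) = 2 * (π / 5) := by ring
  rw [h, Real.cos_two_mul, Real.cos_pi_div_five]
  have h5 : Real.sqrt 5 ^ 2 = 5 := Real.sq_sqrt (by norm_num)
  nlinarith [h5]

lemma sin_two_pi_div_five_lb : (0.9510565 : ℝ) ≤ Real.sin (2 * π / 5) := by
  have hnn : 0 ≤ Real.sin (2 * π / 5) :=
    Real.sin_nonneg_of_nonneg_of_le_pi (by positivity) (by nlinarith [Real.pi_pos])
  have hsq : Real.sin (2 * π / 5) ^ 2 = 1 - Real.cos (2 * π / 5) ^ 2 := Real.sin_sq _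
  rw [cos_two_pi_div_five] at hsq
  nlinarith [sqrt5_lb, sqrt5_ub, Real.sq_sqrt (show (0:ℝ) ≤ 5 by norm_num)]

lemma sin_two_pi_div_five_ub : Real.sin (2 * π / 5) ≤ (0.9510566 : ℝ) := by
  have hnn : 0 ≤ Real.sin (2 * π / 5) :=
    Real.sin_nonneg_of_nonneg_of_le_pi (by positivity) (by nlinarith [Real.pi_pos])
  have hsq : Real.sin (2 * π / 5) ^ 2 = 1 - Real.cos (2 * π / 5) ^ 2 := Real.sin_sq _
  rw [cos_two_pi_div_five] at hsq
  nlinarith [sqrt5_lb, sqrt5_ub, Real.sq_sqrt (show (0:ℝ) ≤ 5 by norm_num)]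

lemma hbeta : (π - (2 * π - π/3) / 5) / 2 = π / 3 := by ring

lemma gval : (Real.cos (2 * π / 5) + (Real.cos ((π - (2 * π - π/3) / 5) / 2)) ^ 2) /
    (Real.sin ((π - (2 * π - π/3) / 5) / 2)) ^ 2 = Real.sqrt 5 / 3 := by
  rw [hbeta, cos_two_pi_div_five, Real.cos_pi_div_three, Real.sin_pi_div_three]
  rw [div_pow, div_pow, Real.sq_sqrt (by norm_num : (0:ℝ) ≤ 3)]
  field_simp
  ring

lemma hasDerivAt_inner : HasDerivAt (fun n : ℝ => (π - (2 * π - π/3) / n) / 2) (π/30) 5 := by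
  have h1 : HasDerivAt (fun n : ℝ => (2 * π - π/3) / n) (-(π/15)) 5 := by
    have := (hasDerivAt_const (5:ℝ) (2 * π - π/3)).div (hasDerivAt_id (5:ℝ)) (by norm_num)
    refine this.congr_deriv ?_
    simp
    ring
  have := ((hasDerivAt_const (5:ℝ) π).sub h1).div_const 2
  refine this.congr_deriv ?_
  ring

lemma hasDerivAt_g : HasDerivAt (fun n : ℝ => (Real.cos (2 * π / n) +
      (Real.cos ((π - (2 * π - π/3) / n) / 2)) ^ 2) /
      (Real.sin ((π - (2 * π - π/3) / n) / 2)) ^ 2)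
    ((((2*π/25) * Real.sin (2*π/5) + (-(Real.sqrt 3 * π / 60))) * (3/4)
        - (Real.sqrt 5 / 4) * (Real.sqrt 3 * π / 60)) / (3/4)^2) 5 := by
  have hβ := hbeta
  have hcn : HasDerivAt (fun n : ℝ => Real.cos (2 * π / n)) ((2*π/25) * Real.sin (2*π/5)) 5 := by
    have hd : HasDerivAt (fun n : ℝ => 2 * π / n) (-(2*π/25)) 5 := by
      have := (hasDerivAt_const (5:ℝ) (2 * π)).div (hasDerivAt_id (5:ℝ)) (by norm_num)
      refine this.congr_deriv ?_
      simp
      ring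
    have := hd.cos
    refine this.congr_deriv ?_
    ring
  have hc2 : HasDerivAt (fun n : ℝ => (Real.cos ((π - (2 * π - π/3) / n) / 2)) ^ 2)
      (-(Real.sqrt 3 * π / 60)) 5 := by
    have := (hasDerivAt_inner.cos).pow 2
    refine this.congr_deriv ?_
    rw [hβ, Real.cos_pi_div_three, Real.sin_pi_div_three]
    push_cast
    ring
  have hs2 : HasDerivAt (fun n : ℝ => (Real.sin ((π - (2 * π - π/3) / n) / 2)) ^ 2)
      (Real.sqrt 3 * π / 60) 5 := by
    have := (hasDerivAt_inner.sin).pow 2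
    refine this.congr_deriv ?_
    rw [hβ, Real.cos_pi_div_three, Real.sin_pi_div_three]
    push_cast
    ring
  have hden : (Real.sin ((π - (2 * π - π/3) / 5) / 2)) ^ 2 ≠ 0 := by
    rw [hβ, Real.sin_pi_div_three]
    positivity
  have := (hcn.add hc2).div hs2 hden
  refine this.congr_deriv ?_
  simp only [Pi.add_apply]
  rw [hβ, Real.cos_pi_div_three, Real.sin_pi_div_three, cos_two_pi_div_five]
  rw [div_pow, div_pow, Real.sq_sqrt (by norm_num : (0:ℝ) ≤ 3)]
  norm_num
  ring

lemma sqrt_one_sub : Real.sqrt (1 - (Real.sqrt 5 / 3) ^ 2) = 2/3 := by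
  rw [div_pow, Real.sq_sqrt (by norm_num : (0:ℝ) ≤ 5)]
  rw [show (1 : ℝ) - 5 / 3^2 = (2/3)^2 by norm_num]
  exact Real.sqrt_sq (by norm_num)

lemma sqrt3_mul_sqrt5 : Real.sqrt 3 * Real.sqrt 5 = Real.sqrt 15 := by
  rw [← Real.sqrt_mul (by norm_num : (0:ℝ) ≤ 3)]
  norm_num

lemma p5'_eq : p5' = Real.arccos (Real.sqrt 5 / 3) - 4 * π / 5 * Real.sin (2 * π / 5)
    + Real.sqrt 3 * π / 6 + Real.sqrt 15 * π / 18 := by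
  have hne1 : (Real.cos (2 * π / 5) + (Real.cos ((π - (2 * π - π/3) / 5) / 2)) ^ 2) /
      (Real.sin ((π - (2 * π - π/3) / 5) / 2)) ^ 2 ≠ -1 := by
    rw [gval]; nlinarith [sqrt5_lb]
  have hne2 : (Real.cos (2 * π / 5) + (Real.cos ((π - (2 * π - π/3) / 5) / 2)) ^ 2) /
      (Real.sin ((π - (2 * π - π/3) / 5) / 2)) ^ 2 ≠ 1 := by
    rw [gval]; nlinarith [sqrt5_ub]
  have hac := (Real.hasDerivAt_arccos hne1 hne2).comp 5 hasDerivAt_g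
  have hfull := (hasDerivAt_id (5:ℝ)).mul hac
  have hD := hfull.deriv
  have hfeq : (fun n : ℝ => regPerim (π / 3) n) = (fun y : ℝ =>
      y * Real.arccos ((Real.cos (2 * π / y) +
        (Real.cos ((π - (2 * π - π/3) / y) / 2)) ^ 2) /
        (Real.sin ((π - (2 * π - π/3) / y) / 2)) ^ 2)) := rfl
  rw [p5', hfeq]
  rw [show (fun y : ℝ => y * Real.arccos ((Real.cos (2 * π / y) +
        (Real.cos ((π - (2 * π - π/3) / y) / 2)) ^ 2) /
        (Real.sin ((π - (2 * π - π/3) / y) / 2)) ^ 2)) =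
      (fun y : ℝ => id y * (Real.arccos ∘ fun n : ℝ =>
        (Real.cos (2 * π / n) + (Real.cos ((π - (2 * π - π/3) / n) / 2)) ^ 2) /
        (Real.sin ((π - (2 * π - π/3) / n) / 2)) ^ 2) y) from rfl]
  erw [hD]
  simp only [Function.comp_apply, id_eq]
  rw [gval, sqrt_one_sub]
  rw [← sqrt3_mul_sqrt5]
  field_simp
  ring

lemma p5_eq : p5 = 5 * Real.arccos (Real.sqrt 5 / 3) := by
  rw [p5, cos_two_pi_div_five]
  norm_num
  ring_nf

lemma p5'_bounds : -0.0776818 ≤ p5' ∧ p5' ≤ -0.0776691 := by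
  rw [p5'_eq]
  have hπl : (3.141592 : ℝ) ≤ π := by linarith [Real.pi_gt_d6]
  have hπu : π ≤ (3.141593 : ℝ) := by linarith [Real.pi_lt_d6]
  have hSl := sin_two_pi_div_five_lb
  have hSu := sin_two_pi_div_five_ub
  have h3l := sqrt3_lb
  have h3u := sqrt3_ub
  have h15l := sqrt15_lb
  have h15u := sqrt15_ub
  have hθl := theta_lb
  have hθu := theta_ub
  have h1 : (3.141592 : ℝ) * 0.9510565 ≤ π * Real.sin (2 * π / 5) :=
    mul_le_mul hπl hSl (by norm_num) (by linarith)
  have h2 : π * Real.sin (2 * π / 5) ≤ (3.141593 : ℝ) * 0.9510566 :=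
    mul_le_mul hπu hSu (by linarith) (by norm_num)
  have h3 : (1.7320508 : ℝ) * 3.141592 ≤ Real.sqrt 3 * π :=
    mul_le_mul h3l hπl (by norm_num) (by linarith)
  have h4 : Real.sqrt 3 * π ≤ (1.7320509 : ℝ) * 3.141593 :=
    mul_le_mul h3u hπu (by linarith) (by norm_num)
  have h5 : (3.8729833 : ℝ) * 3.141592 ≤ Real.sqrt 15 * π :=
    mul_le_mul h15l hπl (by norm_num) (by linarith)
  have h6 : Real.sqrt 15 * π ≤ (3.8729834 : ℝ) * 3.141593 :=
    mul_le_mul h15u hπu (by linarith) (by norm_num)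
  constructor <;> linarith

set_option maxHeartbeats 1000000 in
lemma core {ρ C rlo rhi Clo Chi : ℝ}
    (hρ1 : rlo ≤ ρ) (hρ2 : ρ ≤ rhi) (hrlo : 0 ≤ rlo) (hrhi : rhi ≤ 1) (hlohi : rlo < rhi)
    (hC1 : Clo ≤ C) (hC2 : C ≤ Chi) (hClo0 : 0 ≤ Clo)
    (hnn : Chi ≤ rlo * 3.64861)
    (hq_lo : (rlo * 3.648665 - Clo)^2 < 3.141592^2 * (4*rlo/3 - rlo^2/9))
    (hq_hi : (rhi * 3.648665 - Clo)^2 < 3.141592^2 * (4*rhi/3 - rhi^2/9)) :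
    ρ * p5 - C < Real.sqrt (4 * π * (ρ * π / 3) - (ρ * π / 3) ^ 2) := by
  have hθl := theta_lb
  have hθu := theta_ub
  have hπl : (3.141592 : ℝ) ≤ π := by linarith [Real.pi_gt_d6]
  have hπu : π ≤ (3.141593 : ℝ) := by linarith [Real.pi_lt_d6]
  have hp5l : (3.64861 : ℝ) ≤ p5 := by rw [p5_eq]; linarith
  have hp5u : p5 ≤ (3.648665 : ℝ) := by rw [p5_eq]; linarith
  have hρ0 : 0 ≤ ρ := le_trans hrlo hρ1
  have hmul : rlo * 3.64861 ≤ ρ * p5 :=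
    mul_le_mul hρ1 hp5l (by norm_num) hρ0
  have h0 : 0 ≤ ρ * p5 - C := by linarith
  apply (Real.lt_sqrt h0).mpr
  have step1 : (ρ * p5 - C)^2 ≤ (ρ * 3.648665 - Clo)^2 := by
    have hle : ρ * p5 - C ≤ ρ * 3.648665 - Clo := by
      have := mul_le_mul (le_refl ρ) hp5u (by linarith) hρ0
      linarith
    nlinarith [h0, hle]
  have step2 : (ρ * 3.648665 - Clo)^2 < 3.141592^2 * (4*ρ/3 - ρ^2/9) := by
    rcases eq_or_lt_of_le hρ2 with heq | hlt2
    · rw [heq]; exact hq_hi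
    · have e1 : (rhi - ρ) * ((rlo * 3.648665 - Clo)^2 - 3.141592^2 * (4*rlo/3 - rlo^2/9)) < 0 :=
        mul_neg_of_pos_of_neg (by linarith) (by linarith)
      have e2 : (ρ - rlo) * ((rhi * 3.648665 - Clo)^2 - 3.141592^2 * (4*rhi/3 - rhi^2/9)) ≤ 0 :=
        mul_nonpos_of_nonneg_of_nonpos (by linarith) (by linarith)
      have e3 : 0 ≤ (ρ - rlo) * ((rhi - ρ) * (rhi - rlo)) :=
        mul_nonneg (by linarith) (mul_nonneg (by linarith) (by linarith))
      nlinarith [e1, e2, e3, hlohi]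
  have hππ : (3.141592 : ℝ)^2 ≤ π^2 := by nlinarith
  have hfac : (0:ℝ) ≤ 4*ρ/3 - ρ^2/9 := by nlinarith
  have step3 : (3.141592:ℝ)^2 * (4*ρ/3 - ρ^2/9) ≤ 4 * π * (ρ * π / 3) - (ρ * π / 3) ^ 2 := by
    have := mul_le_mul_of_nonneg_right hππ hfac
    nlinarith [this]
  linarith

theorem case_rho_small_T_nonneg :
    ∀ n ∈ ({5, 6, 7} : Set ℕ), ∀ ρ : ℝ,
      3 * aFn n / π ≤ ρ → ρ ≤ rho1 n →
        Ifun (circPerim0 (ρ * π / 3)) (n : ℝ) 0 ρ > 0 := by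
  intro n hn ρ h1 h2
  simp only [Set.mem_insert_iff, Set.mem_singleton_iff] at hn
  have hπl : (3.141592 : ℝ) ≤ π := by linarith [Real.pi_gt_d6]
  have hπu : π ≤ (3.141593 : ℝ) := by linarith [Real.pi_lt_d6]
  have hπpos := Real.pi_pos
  have hp5'l := p5'_bounds.1
  have hp5'u := p5'_bounds.2
  rcases hn with rfl | rfl | rfl
  · -- n = 5
    have ha : aFn 5 = 0.1 := by norm_num [aFn]
    rw [ha] at h1
    rw [div_le_iff₀ hπpos] at h1
    have hr1 : (0.0954927 : ℝ) ≤ ρ := by nlinarith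
    norm_num [rho1] at h2
    simp only [Ifun, circPerim0, Nat.cast_ofNat]
    have hcore := core (C := (5 - (5:ℝ)) * p5') hr1 h2 (by norm_num) (by norm_num)
      (by norm_num) (Clo := 0) (Chi := 0) (by norm_num) (by norm_num) (by norm_num)
      (by norm_num) (by norm_num) (by norm_num)
    linarith [hcore]
  · -- n = 6
    have ha : aFn 6 = 0.1 := by norm_num [aFn]
    rw [ha] at h1
    rw [div_le_iff₀ hπpos] at h1
    have hr1 : (0.0954927 : ℝ) ≤ ρ := by nlinarith
    norm_num [rho1] at h2
    simp only [Ifun, circPerim0, Nat.cast_ofNat]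
    have hcore := core (C := (5 - (6:ℝ)) * p5') hr1 h2 (by norm_num) (by norm_num)
      (by norm_num) (Clo := 0.0776691) (Chi := 0.0776818) (by nlinarith) (by nlinarith)
      (by norm_num) (by norm_num) (by norm_num) (by norm_num)
    linarith [hcore]
  · -- n = 7
    have ha : aFn 7 = 3.75 / 49 := by norm_num [aFn]
    rw [ha] at h1
    rw [div_le_iff₀ hπpos] at h1
    have hr1 : (0.0730812 : ℝ) ≤ ρ := by nlinarith
    norm_num [rho1] at h2
    simp only [Ifun, circPerim0, Nat.cast_ofNat]
    have hcore := core (C := (5 - (7:ℝ)) * p5') hr1 h2 (by norm_num) (by norm_num)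
      (by norm_num) (Clo := 0.1553382) (Chi := 0.1553636) (by nlinarith) (by nlinarith)
      (by norm_num) (by norm_num) (by norm_num) (by norm_num)
    linarith [hcore]
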